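/- arXiv:1506.06930 — 2 statements merged into one kernel-verified Lean document; each statement's English description precedes it below -/
import Mathlib

section
/- Let h, f, g be functions on ℝ^d with x·h ∈ L^{p₁}, ∇f ∈ L^∞, g ∈ L^{p₂}, where 1 ≤ p, p₁, p₂ ≤ ∞ satisfy 1 + 1/p = 1/p₁ + 1/p₂. Then the commutator of convolution with multiplication satisfies ‖h ⋆ (f g) − f (h ⋆ g)‖_{L^p} ≤ C ‖x h‖_{L^{p₁}} ‖∇f‖_{L^∞} ‖g‖_{L^{p₂}} for a constant C independent of f, g, h. -/
open MeasureTheory ENNReal Filter Set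

noncomputable section

namespace Stmt0Aux

variable {α : Type*} [MeasurableSpace α]

/-- `ℝ≥0∞`-valued `L^q` seminorm. -/
def eN (q : ℝ≥0∞) (F : α → ℝ≥0∞) (μ : Measure α) : ℝ≥0∞ :=
  if q = ∞ then essSup F μ else (∫⁻ x, F x ^ q.toReal ∂μ) ^ (1 / q.toReal)

lemma eN_top (F : α → ℝ≥0∞) (μ : Measure α) : eN ∞ F μ = essSup F μ := if_pos rfl

lemma eN_ne_top {q : ℝ≥0∞} (hq : q ≠ ∞) (F : α → ℝ≥0∞) (μ : Measure α) :
    eN q F μ = (∫⁻ x, F x ^ q.toReal ∂μ) ^ (1 / q.toReal) := if_neg hq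

lemma eLpNorm_eq_eN {β : Type*} [NormedAddCommGroup β] {q : ℝ≥0∞} (hq : q ≠ 0)
    (f : α → β) (μ : Measure α) :
    eLpNorm f q μ = eN q (fun x => (‖f x‖₊ : ℝ≥0∞)) μ := by
  by_cases hqt : q = ∞
  · subst hqt
    rw [eN_top, eLpNorm_exponent_top]
    rfl
  · rw [eN_ne_top hqt, eLpNorm_eq_lintegral_rpow_enorm_toReal hq hqt]
    rfl

lemma eN_mono_ae {q : ℝ≥0∞} {F G : α → ℝ≥0∞} {μ : Measure α} (h : F ≤ᵐ[μ] G) :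
    eN q F μ ≤ eN q G μ := by
  by_cases hqt : q = ∞
  · subst hqt; rw [eN_top, eN_top]; exact essSup_mono_ae h
  · rw [eN_ne_top hqt, eN_ne_top hqt]
    refine ENNReal.rpow_le_rpow ?_ (by positivity)
    refine lintegral_mono_ae ?_
    filter_upwards [h] with x hx using ENNReal.rpow_le_rpow hx ENNReal.toReal_nonneg

lemma eN_const_mul {q : ℝ≥0∞} (hq : q ≠ 0) (c : ℝ≥0∞) (hc : c ≠ ∞) (F : α → ℝ≥0∞)
    (μ : Measure α) : eN q (fun x => c * F x) μ = c * eN q F μ := by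
  by_cases hqt : q = ∞
  · subst hqt; rw [eN_top, eN_top]; exact ENNReal.essSup_const_mul
  · rw [eN_ne_top hqt, eN_ne_top hqt]
    have hr : 0 < q.toReal := ENNReal.toReal_pos hq hqt
    have h1 : ∀ x, (c * F x) ^ q.toReal = c ^ q.toReal * F x ^ q.toReal := fun x =>
      ENNReal.mul_rpow_of_nonneg _ _ hr.le
    simp_rw [h1]
    rw [lintegral_const_mul' _ _ (by exact ENNReal.rpow_ne_top_of_nonneg hr.le hc),
      ENNReal.mul_rpow_of_nonneg _ _ (by positivity), ← ENNReal.rpow_mul,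
      mul_one_div_cancel hr.ne', ENNReal.rpow_one]


section E

variable {d : ℕ}

local notation "𝔼" => EuclideanSpace ℝ (Fin d)

lemma lintegral_sub_left' (F : 𝔼 → ℝ≥0∞) (x : 𝔼) :
    ∫⁻ y, F (x - y) = ∫⁻ y, F y := by
  have h := (Measure.measurePreserving_sub_left (volume : Measure 𝔼) x)
  have hemb : MeasurableEmbedding (fun y : 𝔼 => x - y) :=
    (MeasurableEquiv.neg 𝔼).trans (MeasurableEquiv.addLeft x) |>.measurableEmbedding
  exact h.lintegral_comp_emb hemb F

lemma ae_sub_left {x : 𝔼} {Q : 𝔼 → Prop} (h : ∀ᵐ z, Q z) : ∀ᵐ y, Q (x - y) :=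
  (Measure.measurePreserving_sub_left (volume : Measure 𝔼) x).quasiMeasurePreserving.ae h

lemma aemeasurable_sub_left {x : 𝔼} {G : 𝔼 → ℝ≥0∞} (hG : AEMeasurable G (volume : Measure 𝔼)) :
    AEMeasurable (fun y => G (x - y)) volume :=
  hG.comp_quasiMeasurePreserving
    (Measure.measurePreserving_sub_left (volume : Measure 𝔼) x).quasiMeasurePreserving

lemma qmp_snd : Measure.QuasiMeasurePreserving (Prod.snd : 𝔼 × 𝔼 → 𝔼)
    ((volume : Measure 𝔼).prod (volume : Measure 𝔼)) volume := by
  refine ⟨measurable_snd, ?_⟩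
  rw [Measure.map_snd_prod]
  exact Measure.smul_absolutelyContinuous

lemma qmp_sub : Measure.QuasiMeasurePreserving (fun z : 𝔼 × 𝔼 => z.1 - z.2)
    ((volume : Measure 𝔼).prod (volume : Measure 𝔼)) volume := by
  refine ⟨measurable_fst.sub measurable_snd, ?_⟩
  have : (fun z : 𝔼 × 𝔼 => z.1 - z.2) = Prod.fst ∘ (fun z : 𝔼 × 𝔼 => (z.1 - z.2, z.2)) := rfl
  rw [this, ← Measure.map_map measurable_fst (show Measurable (fun z : 𝔼 × 𝔼 => (z.1 - z.2, z.2)) from (measurable_fst.sub measurable_snd).prodMk measurable_snd), (measurePreserving_sub_prod _ _).map_eq, Measure.map_fst_prod]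
  exact Measure.smul_absolutelyContinuous


/-- Young's convolution inequality, `ℝ≥0∞`-valued version. -/
lemma young {K G : 𝔼 → ℝ≥0∞} (hK : AEMeasurable K (volume : Measure 𝔼))
    (hG : AEMeasurable G (volume : Measure 𝔼)) {p p₁ p₂ : ℝ≥0∞}
    (hp : 1 ≤ p) (hp₁ : 1 ≤ p₁) (hp₂ : 1 ≤ p₂) (hexp : 1 + 1/p = 1/p₁ + 1/p₂) :
    eN p (fun x => ∫⁻ y, K y * G (x - y)) volume ≤ eN p₁ K volume * eN p₂ G volume := by
  have hp₁0 : p₁ ≠ 0 := (zero_lt_one.trans_le hp₁).ne'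
  have hp₂0 : p₂ ≠ 0 := (zero_lt_one.trans_le hp₂).ne'
  have hp0 : p ≠ 0 := (zero_lt_one.trans_le hp).ne'
  by_cases hpt : p = ∞
  · -- `p = ∞` : Hölder's inequality
    subst hpt
    have h12 : 1/p₁ + 1/p₂ = 1 := by rw [← hexp]; simp
    rw [eN_top]
    refine essSup_le_of_ae_le _ (ae_of_all _ fun x => ?_)
    by_cases hp₁t : p₁ = ∞
    · -- p₂ = 1
      have hp₂1 : p₂ = 1 := by
        rw [hp₁t] at h12; simp only [one_div] at h12
        rw [ENNReal.inv_top, zero_add] at h12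
        exact ENNReal.inv_eq_one.mp h12
      subst hp₂1
      rw [hp₁t, eN_top, eN_ne_top one_ne_top]
      simp only [ENNReal.toReal_one, ENNReal.rpow_one, div_one]
      calc ∫⁻ y, K y * G (x - y)
          ≤ ∫⁻ y, essSup K volume * G (x - y) := by
            refine lintegral_mono_ae ?_
            filter_upwards [ENNReal.ae_le_essSup K] with y hy using
              mul_le_mul_left hy _
        _ = essSup K volume * ∫⁻ y, G (x - y) :=
            lintegral_const_mul'' _ (aemeasurable_sub_left hG)
        _ = essSup K volume * ∫⁻ y, G y := by rw [lintegral_sub_left' G x]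
    · by_cases hp₂t : p₂ = ∞
      · -- p₁ = 1
        have hp₁1 : p₁ = 1 := by
          rw [hp₂t] at h12; simp only [one_div] at h12
          rw [ENNReal.inv_top, add_zero] at h12
          exact ENNReal.inv_eq_one.mp h12
        subst hp₁1
        rw [hp₂t, eN_top, eN_ne_top one_ne_top]
        simp only [ENNReal.toReal_one, ENNReal.rpow_one, div_one]
        have hae : ∀ᵐ y ∂(volume : Measure 𝔼), G (x - y) ≤ essSup G volume :=
          ae_sub_left (ENNReal.ae_le_essSup G)
        calc ∫⁻ y, K y * G (x - y)
            ≤ ∫⁻ y, K y * essSup G volume := by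
              refine lintegral_mono_ae ?_
              filter_upwards [hae] with y hy using mul_le_mul_right hy _
          _ = (∫⁻ y, K y) * essSup G volume := lintegral_mul_const'' _ hK
      · -- 1 < p₁, p₂ < ∞ conjugate
        have hp₁1 : p₁ ≠ 1 := by
          intro h1; rw [h1] at h12; simp only [one_div, inv_one] at h12
          have h0 : p₂⁻¹ = 0 := by
            nth_rewrite 2 [← add_zero (1 : ℝ≥0∞)] at h12
            exact (ENNReal.add_right_inj one_ne_top).mp h12
          exact hp₂t (ENNReal.inv_eq_zero.mp h0)
        set r₁ := p₁.toReal with hr₁def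
        set r₂ := p₂.toReal with hr₂def
        have hsum : 1/r₁ + 1/r₂ = 1 := by
          have := congrArg ENNReal.toReal h12
          rw [ENNReal.toReal_add (by simp [one_div, ENNReal.inv_ne_top, hp₁0])
            (by simp [one_div, ENNReal.inv_ne_top, hp₂0])] at this
          simpa [one_div, ENNReal.toReal_inv] using this
        have hconj : r₁.HolderConjugate r₂ := by
          refine Real.holderConjugate_iff.mpr ⟨?_, by simpa [one_div] using hsum⟩
          have h1r : 1 < p₁ := lt_of_le_of_ne hp₁ (Ne.symm hp₁1)
          have := ENNReal.toReal_mono hp₁t h1r.le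
          simp only [ENNReal.toReal_one] at this
          rcases this.lt_or_eq with h | h
          · exact h
          · exfalso; apply hp₁1
            have : p₁.toReal = (1 : ℝ≥0∞).toReal := by simp [← h]
            exact (ENNReal.toReal_eq_toReal_iff' hp₁t one_ne_top).mp this
        calc ∫⁻ y, K y * G (x - y)
            = ∫⁻ y, (K * fun y => G (x - y)) y := by simp [Pi.mul_apply]
          _ ≤ (∫⁻ y, K y ^ r₁) ^ (1/r₁) * (∫⁻ y, G (x - y) ^ r₂) ^ (1/r₂) :=
              ENNReal.lintegral_mul_le_Lp_mul_Lq volume hconj hK (aemeasurable_sub_left hG)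
          _ = eN p₁ K volume * eN p₂ G volume := by
              rw [lintegral_sub_left' (fun y => G y ^ r₂) x, eN_ne_top hp₁t, eN_ne_top hp₂t]
  · -- `p ≠ ∞`
    have hppos : (0:ℝ≥0∞) < 1/p := by
      simp only [one_div]; exact ENNReal.inv_pos.mpr hpt
    have hlt : (1:ℝ≥0∞) < 1 + 1/p := ENNReal.lt_add_right one_ne_top hppos.ne'
    have hp₁t : p₁ ≠ ∞ := by
      intro h1
      have : 1 + 1/p ≤ 1 := by
        rw [hexp, h1]; simp only [one_div, ENNReal.inv_top, zero_add]
        exact ENNReal.inv_le_one.mpr hp₂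
      exact absurd this hlt.not_ge
    have hp₂t : p₂ ≠ ∞ := by
      intro h2
      have : 1 + 1/p ≤ 1 := by
        rw [hexp, h2]; simp only [one_div, ENNReal.inv_top, add_zero]
        exact ENNReal.inv_le_one.mpr hp₁
      exact absurd this hlt.not_ge
    rw [eN_ne_top hpt, eN_ne_top hp₁t, eN_ne_top hp₂t]
    set r := p.toReal with hrdef
    set r₁ := p₁.toReal with hr₁def
    set r₂ := p₂.toReal with hr₂def
    have hr1 : 1 ≤ r := by
      have := ENNReal.toReal_mono hpt hp; simpa using this
    have hr₁1 : 1 ≤ r₁ := by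
      have := ENNReal.toReal_mono hp₁t hp₁; simpa using this
    have hr₂1 : 1 ≤ r₂ := by
      have := ENNReal.toReal_mono hp₂t hp₂; simpa using this
    have hr0 : 0 < r := zero_lt_one.trans_le hr1
    have hr₁0 : 0 < r₁ := zero_lt_one.trans_le hr₁1
    have hr₂0 : 0 < r₂ := zero_lt_one.trans_le hr₂1
    have hre : 1 + 1/r = 1/r₁ + 1/r₂ := by
      have := congrArg ENNReal.toReal hexp
      rw [ENNReal.toReal_add one_ne_top (by simp [one_div, ENNReal.inv_ne_top, hp0]),
        ENNReal.toReal_add (by simp [one_div, ENNReal.inv_ne_top, hp₁0])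
          (by simp [one_div, ENNReal.inv_ne_top, hp₂0])] at this
      simpa [one_div, ENNReal.toReal_inv] using this
    set θ₁ : ℝ := 1/r₁ - 1/r with hθ₁def
    set θ₂ : ℝ := 1/r₂ - 1/r with hθ₂def
    have h1r₂ : 1/r₂ ≤ 1 := by
      rw [div_le_one hr₂0]; exact hr₂1
    have h1r₁ : 1/r₁ ≤ 1 := by
      rw [div_le_one hr₁0]; exact hr₁1
    have hθ₁0 : 0 ≤ θ₁ := by rw [hθ₁def]; linarith
    have hθ₂0 : 0 ≤ θ₂ := by rw [hθ₂def]; linarith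
    set A := ∫⁻ y, K y ^ r₁ with hAdef
    set B := ∫⁻ y, G y ^ r₂ with hBdef
    have hKr : AEMeasurable (fun y => K y ^ r₁) (volume : Measure 𝔼) := hK.pow_const r₁
    have hGr : AEMeasurable (fun y => G y ^ r₂) (volume : Measure 𝔼) := hG.pow_const r₂
    -- now the goal is expressed in terms of A, B
    by_cases hA0 : A = 0
    · have hKz : ∀ᵐ y ∂(volume : Measure 𝔼), K y = 0 := by
        filter_upwards [(lintegral_eq_zero_iff' hKr).mp hA0] with y hy
        have := ENNReal.rpow_eq_zero_iff.mp hy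
        rcases this with ⟨h, _⟩ | ⟨_, h⟩
        · exact h
        · linarith
      have hΛ : ∀ x, (∫⁻ y, K y * G (x - y)) = 0 := by
        intro x
        have : ∀ᵐ y ∂(volume : Measure 𝔼), K y * G (x - y) = 0 := by
          filter_upwards [hKz] with y hy; simp [hy]
        rw [lintegral_congr_ae this, lintegral_zero]
      simp only [hΛ]
      rw [ENNReal.zero_rpow_of_pos hr0, lintegral_zero,
        ENNReal.zero_rpow_of_pos (by positivity)]
      exact zero_le
    · by_cases hB0 : B = 0
      · have hGz : ∀ᵐ y ∂(volume : Measure 𝔼), G y = 0 := by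
          filter_upwards [(lintegral_eq_zero_iff' hGr).mp hB0] with y hy
          have := ENNReal.rpow_eq_zero_iff.mp hy
          rcases this with ⟨h, _⟩ | ⟨_, h⟩
          · exact h
          · linarith
        have hΛ : ∀ x, (∫⁻ y, K y * G (x - y)) = 0 := by
          intro x
          have : ∀ᵐ y ∂(volume : Measure 𝔼), K y * G (x - y) = 0 := by
            filter_upwards [ae_sub_left (x := x) hGz] with y hy; simp [hy]
          rw [lintegral_congr_ae this, lintegral_zero]
        simp only [hΛ]
        rw [ENNReal.zero_rpow_of_pos hr0, lintegral_zero,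
          ENNReal.zero_rpow_of_pos (by positivity)]
        exact zero_le
      · by_cases hAt : A = ⊤
        · rw [hAt, ENNReal.top_rpow_of_pos (by positivity), ENNReal.top_mul]
          · exact le_top
          · intro h
            exact hB0 (by
              rcases ENNReal.rpow_eq_zero_iff.mp h with ⟨h', _⟩ | ⟨_, h'⟩
              · exact h'
              · exfalso
                have : (0:ℝ) < 1/r₂ := by positivity
                linarith)
        · by_cases hBt : B = ⊤
          · rw [hBt, ENNReal.top_rpow_of_pos (by positivity), ENNReal.mul_top]
            · exact le_top
            · intro h
              exact hA0 (by
                rcases ENNReal.rpow_eq_zero_iff.mp h with ⟨h', _⟩ | ⟨_, h'⟩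
                · exact h'
                · exfalso
                  have : (0:ℝ) < 1/r₁ := by positivity
                  linarith)
          · -- main case : 0 < A, B < ⊤
            set W : 𝔼 → ℝ≥0∞ := fun x => ∫⁻ y, K y ^ r₁ * G (x - y) ^ r₂ with hWdef
            have hid : ∀ z w : ℝ≥0∞,
                (z ^ r₁ * w ^ r₂) ^ (1/r) * (z ^ r₁) ^ θ₁ * (w ^ r₂) ^ θ₂ = z * w := by
              intro z w
              rw [ENNReal.mul_rpow_of_nonneg _ _ (by positivity : (0:ℝ) ≤ 1/r),
                ← ENNReal.rpow_mul, ← ENNReal.rpow_mul, ← ENNReal.rpow_mul,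
                ← ENNReal.rpow_mul]
              have e₁ : r₁ * (1/r) + r₁ * θ₁ = 1 := by
                rw [hθ₁def]; field_simp; ring
              have e₂ : r₂ * (1/r) + r₂ * θ₂ = 1 := by
                rw [hθ₂def]; field_simp; ring
              calc z ^ (r₁ * (1/r)) * w ^ (r₂ * (1/r)) * z ^ (r₁ * θ₁) * w ^ (r₂ * θ₂)
                  = (z ^ (r₁ * (1/r)) * z ^ (r₁ * θ₁)) * (w ^ (r₂ * (1/r)) * w ^ (r₂ * θ₂)) := by
                    ring
                _ = z ^ (r₁ * (1/r) + r₁ * θ₁) * w ^ (r₂ * (1/r) + r₂ * θ₂) := by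
                    rw [ENNReal.rpow_add_of_nonneg (x := z) _ _
                        (mul_nonneg hr₁0.le (by positivity)) (mul_nonneg hr₁0.le hθ₁0),
                      ENNReal.rpow_add_of_nonneg (x := w) _ _
                        (mul_nonneg hr₂0.le (by positivity)) (mul_nonneg hr₂0.le hθ₂0)]
                _ = z * w := by rw [e₁, e₂, ENNReal.rpow_one, ENNReal.rpow_one]
            have key : ∀ x, (∫⁻ y, K y * G (x - y)) ≤ W x ^ (1/r) * A ^ θ₁ * B ^ θ₂ := by
              intro x
              have hmeas : ∀ i ∈ Finset.univ, AEMeasurable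
                  (![fun y => K y ^ r₁ * G (x - y) ^ r₂,
                     fun y => K y ^ r₁, fun y => G (x - y) ^ r₂] i) (volume : Measure 𝔼) := by
                intro i _
                fin_cases i
                · exact hKr.mul ((aemeasurable_sub_left hG).pow_const r₂)
                · exact hKr
                · exact (aemeasurable_sub_left hG).pow_const r₂
              have hsum : ∑ i, ![1/r, θ₁, θ₂] i = 1 := by
                simp only [Fin.sum_univ_three, Matrix.cons_val_zero, Matrix.cons_val_one,
                  Matrix.head_cons, Matrix.cons_val_two, Matrix.tail_cons, hθ₁def, hθ₂def]
                linarith [hre]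
              have hnn : ∀ i ∈ Finset.univ, 0 ≤ ![1/r, θ₁, θ₂] i := by
                intro i _
                fin_cases i
                · show (0:ℝ) ≤ 1/r; positivity
                · show (0:ℝ) ≤ θ₁; exact hθ₁0
                · show (0:ℝ) ≤ θ₂; exact hθ₂0
              have H := ENNReal.lintegral_prod_norm_pow_le Finset.univ hmeas hsum hnn
              simp only [Fin.prod_univ_three, Matrix.cons_val_zero, Matrix.cons_val_one,
                Matrix.head_cons, Matrix.cons_val_two, Matrix.tail_cons] at H
              calc (∫⁻ y, K y * G (x - y))
                  = ∫⁻ y, (K y ^ r₁ * G (x - y) ^ r₂) ^ (1/r) * (K y ^ r₁) ^ θ₁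
                      * (G (x - y) ^ r₂) ^ θ₂ :=
                    lintegral_congr fun y => (hid (K y) (G (x - y))).symm
                _ ≤ (∫⁻ y, K y ^ r₁ * G (x - y) ^ r₂) ^ (1/r) * (∫⁻ y, K y ^ r₁) ^ θ₁
                      * (∫⁻ y, G (x - y) ^ r₂) ^ θ₂ := H
                _ = W x ^ (1/r) * A ^ θ₁ * B ^ θ₂ := by
                    rw [lintegral_sub_left' (fun y => G y ^ r₂) x]
            have hABfin : A ^ (r * θ₁) * B ^ (r * θ₂) ≠ ⊤ :=
              ENNReal.mul_ne_top
                (ENNReal.rpow_ne_top_of_nonneg (mul_nonneg hr0.le hθ₁0) hAt)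
                (ENNReal.rpow_ne_top_of_nonneg (mul_nonneg hr0.le hθ₂0) hBt)
            have hWint : (∫⁻ x, W x) = A * B := by
              have hswap : (∫⁻ x, W x) = ∫⁻ y, ∫⁻ x, K y ^ r₁ * G (x - y) ^ r₂ := by
                rw [hWdef]
                exact lintegral_lintegral_swap
                  (((hK.comp_quasiMeasurePreserving qmp_snd).pow_const r₁).mul
                    ((hG.comp_quasiMeasurePreserving qmp_sub).pow_const r₂))
              rw [hswap]
              have hinner : ∀ y : 𝔼, (∫⁻ x, K y ^ r₁ * G (x - y) ^ r₂) = K y ^ r₁ * B := by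
                intro y
                have hm : AEMeasurable (fun x : 𝔼 => G (x - y) ^ r₂) (volume : Measure 𝔼) :=
                  (hG.comp_quasiMeasurePreserving
                    (measurePreserving_sub_right (volume : Measure 𝔼) y).quasiMeasurePreserving).pow_const r₂
                rw [lintegral_const_mul'' _ hm]
                congr 1
                simpa [sub_eq_add_neg] using
                  lintegral_add_right_eq_self (fun z => G z ^ r₂) (-y)
              rw [lintegral_congr hinner, lintegral_mul_const' _ _ hBt]
            have hΛr : ∀ x, (∫⁻ y, K y * G (x - y)) ^ r ≤ W x * (A ^ (r * θ₁) * B ^ (r * θ₂)) := by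
              intro x
              calc (∫⁻ y, K y * G (x - y)) ^ r
                  ≤ (W x ^ (1/r) * A ^ θ₁ * B ^ θ₂) ^ r :=
                    ENNReal.rpow_le_rpow (key x) hr0.le
                _ = W x * (A ^ (r * θ₁) * B ^ (r * θ₂)) := by
                    rw [ENNReal.mul_rpow_of_nonneg _ _ hr0.le,
                      ENNReal.mul_rpow_of_nonneg _ _ hr0.le,
                      ← ENNReal.rpow_mul, ← ENNReal.rpow_mul, ← ENNReal.rpow_mul,
                      one_div_mul_cancel hr0.ne', ENNReal.rpow_one,
                      mul_comm θ₁ r, mul_comm θ₂ r, mul_assoc]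
            calc (∫⁻ x, (∫⁻ y, K y * G (x - y)) ^ r) ^ (1/r)
                ≤ (∫⁻ x, W x * (A ^ (r * θ₁) * B ^ (r * θ₂))) ^ (1/r) :=
                  ENNReal.rpow_le_rpow (lintegral_mono fun x => hΛr x) (by positivity)
              _ = (A * B * (A ^ (r * θ₁) * B ^ (r * θ₂))) ^ (1/r) := by
                  rw [lintegral_mul_const' _ _ hABfin, hWint]
              _ = A ^ (1/r₁) * B ^ (1/r₂) := by
                  have hA' : A * A ^ (r * θ₁) = A ^ (r * (1/r₁)) := by
                    have : r * (1/r₁) = 1 + r * θ₁ := by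
                      rw [hθ₁def]; field_simp; ring
                    rw [this, ENNReal.rpow_add _ _ hA0 hAt, ENNReal.rpow_one]
                  have hB' : B * B ^ (r * θ₂) = B ^ (r * (1/r₂)) := by
                    have : r * (1/r₂) = 1 + r * θ₂ := by
                      rw [hθ₂def]; field_simp; ring
                    rw [this, ENNReal.rpow_add _ _ hB0 hBt, ENNReal.rpow_one]
                  calc (A * B * (A ^ (r * θ₁) * B ^ (r * θ₂))) ^ (1/r)
                      = ((A * A ^ (r * θ₁)) * (B * B ^ (r * θ₂))) ^ (1/r) := by
                        ring_nf
                    _ = (A ^ (r * (1/r₁)) * B ^ (r * (1/r₂))) ^ (1/r) := by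
                        rw [hA', hB']
                    _ = A ^ (1/r₁) * B ^ (1/r₂) := by
                        rw [ENNReal.mul_rpow_of_nonneg _ _ (by positivity : (0:ℝ) ≤ 1/r),
                          ← ENNReal.rpow_mul, ← ENNReal.rpow_mul]
                        congr 1 <;> · congr 1; field_simp


lemma norm_sub_le_of_ae_deriv_bound {f : 𝔼 → ℝ} (hf : Differentiable ℝ f) {M : ℝ}
    (hM : 0 ≤ M) (x y : 𝔼)
    (hbd : ∀ᵐ t ∂(volume : Measure ℝ),
      t ∈ Set.Ioc (0:ℝ) 1 → ‖fderiv ℝ f (x - t • y)‖ ≤ M) :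
    ‖f (x - y) - f x‖ ≤ M * ‖y‖ := by
  set D : ℝ → ℝ := fun t => (fderiv ℝ f (x - t • y)) (-y) with hDdef
  have hderiv : ∀ t ∈ Set.uIcc (0:ℝ) 1, HasDerivAt (fun t : ℝ => f (x - t • y)) (D t) t := by
    intro t _
    have hc : HasDerivAt (fun t : ℝ => x - t • y) (-y) t := by
      have h1 : HasDerivAt (fun t : ℝ => t • y) ((1:ℝ) • y) t := (hasDerivAt_id t).smul_const y
      simpa using h1.const_sub x
    exact (hf.differentiableAt.hasFDerivAt.comp_hasDerivAt t hc)
  have hDmeas : Measurable D := by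
    have h1 : Measurable fun t : ℝ => fderiv ℝ f (x - t • y) :=
      (measurable_fderiv ℝ f).comp
        ((continuous_const.sub (continuous_id.smul continuous_const)).measurable)
    exact (ContinuousLinearMap.apply ℝ ℝ (-y)).continuous.measurable.comp h1
  have hDbd : ∀ᵐ t ∂(volume.restrict (Set.Ioc (0:ℝ) 1)), ‖D t‖ ≤ M * ‖y‖ := by
    refine (ae_restrict_iff' measurableSet_Ioc).mpr ?_
    filter_upwards [hbd] with t ht hmem
    calc ‖D t‖ ≤ ‖fderiv ℝ f (x - t • y)‖ * ‖-y‖ :=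
          (fderiv ℝ f (x - t • y)).le_opNorm (-y)
      _ ≤ M * ‖y‖ := by
          rw [norm_neg]
          exact mul_le_mul_of_nonneg_right (ht hmem) (norm_nonneg y)
  have hInt : IntervalIntegrable D volume 0 1 := by
    rw [intervalIntegrable_iff, Set.uIoc_of_le zero_le_one]
    exact (integrable_const (M * ‖y‖)).mono' hDmeas.aestronglyMeasurable hDbd
  have hFTC := intervalIntegral.integral_eq_sub_of_hasDerivAt hderiv hInt
  simp only [one_smul, zero_smul, sub_zero] at hFTC
  rw [← hFTC, intervalIntegral.integral_of_le zero_le_one]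
  calc ‖∫ t in Set.Ioc (0:ℝ) 1, D t‖ ≤ ∫ _ in Set.Ioc (0:ℝ) 1, M * ‖y‖ :=
        norm_integral_le_of_norm_le (integrable_const _) hDbd
    _ = M * ‖y‖ := by simp [Real.volume_Ioc]

lemma ae_lipschitz {f : 𝔼 → ℝ} {M : ℝ}
    (hN : ∀ᵐ z ∂(volume : Measure 𝔼), ‖fderiv ℝ f z‖ ≤ M) :
    ∀ᵐ x ∂(volume : Measure 𝔼), ∀ᵐ y ∂(volume : Measure 𝔼), ∀ᵐ t ∂(volume : Measure ℝ),
      ‖fderiv ℝ f (x - t • y)‖ ≤ M := by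
  have hnormmeas : Measurable fun z : 𝔼 => ‖fderiv ℝ f z‖ := (measurable_fderiv ℝ f).norm
  set N : Set 𝔼 := {z | ¬ ‖fderiv ℝ f z‖ ≤ M} with hNdef
  have hNmeas : MeasurableSet N := by
    have : N = (fun z : 𝔼 => ‖fderiv ℝ f z‖) ⁻¹' Set.Ioi M := by
      ext z; simp [hNdef, not_le]
    rw [this]
    exact hnormmeas measurableSet_Ioi
  have hN0 : volume N = 0 := hN
  set S : Set (𝔼 × 𝔼 × ℝ) := {q | q.1 - q.2.2 • q.2.1 ∈ N} with hSdef
  have hφ : Measurable fun q : 𝔼 × 𝔼 × ℝ => q.1 - q.2.2 • q.2.1 :=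
    measurable_fst.sub (measurable_snd.snd.smul measurable_snd.fst)
  have hSmeas : MeasurableSet S := hφ hNmeas
  have hS0 : ((volume : Measure 𝔼).prod ((volume : Measure 𝔼).prod (volume : Measure ℝ))) S
      = 0 := by
    rw [Measure.prod_apply_symm hSmeas]
    have hslice : ∀ w : 𝔼 × ℝ, volume ((fun x : 𝔼 => (x, w)) ⁻¹' S) = 0 := by
      intro w
      have : (fun x : 𝔼 => (x, w)) ⁻¹' S = (fun x : 𝔼 => x + -(w.2 • w.1)) ⁻¹' N := by
        ext x; simp [hSdef, sub_eq_add_neg]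
      rw [this, measure_preimage_add_right _ _ _]
      exact hN0
    simp only [hslice, lintegral_zero]
  have hae := Measure.ae_ae_of_ae_prod (measure_eq_zero_iff_ae_notMem.mp hS0)
  filter_upwards [hae] with x hx
  have hae2 := Measure.ae_ae_of_ae_prod hx
  filter_upwards [hae2] with y hy
  filter_upwards [hy] with t ht
  simpa [hSdef, hNdef, not_not] using ht

lemma aesm_of_smul {h : 𝔼 → ℝ}
    (H : AEStronglyMeasurable (fun x => h x • x : 𝔼 → 𝔼) volume) :
    AEStronglyMeasurable h volume := by
  rcases eq_or_ne d 0 with rfl | hd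
  · have : h = fun _ => h (0 : EuclideanSpace ℝ (Fin 0)) :=
      funext fun x => by rw [Subsingleton.elim x 0]
    rw [this]
    exact aestronglyMeasurable_const
  · haveI : Nontrivial 𝔼 := by
      haveI : Nonempty (Fin d) := ⟨⟨0, Nat.pos_of_ne_zero hd⟩⟩
      infer_instance
    obtain ⟨ψ, hψ, hae⟩ := H
    have hmeas : Measurable fun x : 𝔼 => (inner ℝ (ψ x) x : ℝ) / ‖x‖ ^ 2 :=
      (hψ.measurable.inner measurable_id).div ((measurable_norm).pow_const 2)
    refine ⟨fun x => (inner ℝ (ψ x) x : ℝ) / ‖x‖ ^ 2, hmeas.stronglyMeasurable, ?_⟩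
    have h0 : ∀ᵐ x ∂(volume : Measure 𝔼), x ≠ 0 := by
      refine (ae_iff.mpr ?_)
      simpa using measure_singleton (0 : 𝔼)
    filter_upwards [hae, h0] with x hx hx0
    rw [← hx, real_inner_smul_left, real_inner_self_eq_norm_sq]
    exact (mul_div_cancel_right₀ _ (pow_ne_zero 2 (norm_ne_zero_iff.mpr hx0))).symm

end E

end Stmt0Aux

open Stmt0Aux in
/-- Lemma 2.6: if `1 + 1/p = 1/p₁ + 1/p₂`, `x·h ∈ L^{p₁}`, `∇f ∈ L^∞` and
`g ∈ L^{p₂}`, then `‖h ⋆ (fg) − f (h ⋆ g)‖_{L^p} ≤ C ‖x h‖_{L^{p₁}} ‖∇f‖_{L^∞} ‖g‖_{L^{p₂}}`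
with `C` independent of `f, g, h`. -/
theorem stmt_0 (d : ℕ) (p p₁ p₂ : ℝ≥0∞) (hp : 1 ≤ p) (hp₁ : 1 ≤ p₁) (hp₂ : 1 ≤ p₂)
    (hexp : 1 + 1/p = 1/p₁ + 1/p₂) :
    ∃ C : ℝ≥0∞, C ≠ ⊤ ∧
      ∀ (h f g : EuclideanSpace ℝ (Fin d) → ℝ),
        MemLp (fun x => h x • x : EuclideanSpace ℝ (Fin d) → EuclideanSpace ℝ (Fin d))
          p₁ volume →
        Differentiable ℝ f →
        MemLp (fun x => fderiv ℝ f x) ⊤ volume →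
        MemLp g p₂ volume →
        eLpNorm
          (fun x => convolution h (fun y => f y * g y) (ContinuousLinearMap.mul ℝ ℝ) volume x
            - f x * convolution h g (ContinuousLinearMap.mul ℝ ℝ) volume x) p volume
          ≤ C * eLpNorm (fun x => h x • x : EuclideanSpace ℝ (Fin d) → EuclideanSpace ℝ (Fin d))
                p₁ volume
              * eLpNorm (fun x => fderiv ℝ f x) ⊤ volume
              * eLpNorm g p₂ volume := by
  classical
  have hp0 : p ≠ 0 := (zero_lt_one.trans_le hp).ne'
  have hp₁0 : p₁ ≠ 0 := (zero_lt_one.trans_le hp₁).ne'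
  have hp₂0 : p₂ ≠ 0 := (zero_lt_one.trans_le hp₂).ne'
  refine ⟨1, one_ne_top, ?_⟩
  intro h f g hh hfd hfM hg
  set L := ContinuousLinearMap.mul ℝ ℝ with hLdef
  have hh1 : AEStronglyMeasurable (fun x => h x • x :
      EuclideanSpace ℝ (Fin d) → EuclideanSpace ℝ (Fin d)) volume := hh.aestronglyMeasurable
  have hmeash : AEStronglyMeasurable h volume := aesm_of_smul hh1
  have hmeasg : AEStronglyMeasurable g volume := hg.aestronglyMeasurable
  have hcontf : Continuous f := hfd.continuous
  set Me := eLpNorm (fun x => fderiv ℝ f x) ⊤ volume with hMedef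
  have hMet : Me ≠ ⊤ := hfM.eLpNorm_lt_top.ne
  set M := Me.toReal with hMdef
  have hM0 : 0 ≤ M := ENNReal.toReal_nonneg
  have hMe_eq : ENNReal.ofReal M = Me := ENNReal.ofReal_toReal hMet
  have hfdM : ∀ᵐ z ∂(volume : Measure (EuclideanSpace ℝ (Fin d))), ‖fderiv ℝ f z‖ ≤ M := by
    have h1 := ae_le_eLpNormEssSup (f := fun x => fderiv ℝ f x)
      (μ := (volume : Measure (EuclideanSpace ℝ (Fin d))))
    filter_upwards [h1] with z hz
    have h2 : (‖fderiv ℝ f z‖₊ : ℝ≥0∞) ≤ Me := by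
      rw [hMedef, eLpNorm_exponent_top]; exact hz
    have h3 := ENNReal.toReal_mono hMet h2
    simpa using h3
  set K : EuclideanSpace ℝ (Fin d) → ℝ≥0∞ := fun y => (‖h y • y‖₊ : ℝ≥0∞) with hKdef
  set Gn : EuclideanSpace ℝ (Fin d) → ℝ≥0∞ := fun y => (‖g y‖₊ : ℝ≥0∞) with hGdef
  have hKmeas : AEMeasurable K volume := hh1.enorm
  have hGmeas : AEMeasurable Gn volume := hmeasg.enorm
  set Φ : EuclideanSpace ℝ (Fin d) → ℝ≥0∞ := fun x => ∫⁻ y, K y * Gn (x - y) with hΦdef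
  have hlip := ae_lipschitz (f := f) (M := M) hfdM
  have hptwise : ∀ᵐ x ∂(volume : Measure (EuclideanSpace ℝ (Fin d))),
      (‖convolution h (fun y => f y * g y) L volume x
        - f x * convolution h g L volume x‖₊ : ℝ≥0∞) ≤ Me * Φ x := by
    filter_upwards [hlip] with x hx
    have hP1 : ∀ᵐ y ∂(volume : Measure (EuclideanSpace ℝ (Fin d))),
        ‖f (x - y) - f x‖ ≤ M * ‖y‖ := by
      filter_upwards [hx] with y hy
      exact norm_sub_le_of_ae_deriv_bound hfd hM0 x y (hy.mono fun t ht _ => ht)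
    have hconv_g : convolution h g L volume x = ∫ y, h y * g (x - y) := by
      simp [hLdef, convolution, ContinuousLinearMap.mul_apply']
    have hconv_fg : convolution h (fun y => f y * g y) L volume x
        = ∫ y, h y * (f (x - y) * g (x - y)) := by
      simp [hLdef, convolution, ContinuousLinearMap.mul_apply']
    set Dd : EuclideanSpace ℝ (Fin d) → ℝ :=
      fun y => h y * g (x - y) * (f (x - y) - f x) with hDddef
    have hDdbd : ∀ᵐ y ∂(volume : Measure (EuclideanSpace ℝ (Fin d))),
        (‖Dd y‖₊ : ℝ≥0∞) ≤ Me * (K y * Gn (x - y)) := by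
      filter_upwards [hP1] with y hy
      have hre : ‖Dd y‖ ≤ M * (‖h y • y‖ * ‖g (x - y)‖) := by
        rw [hDddef]
        calc ‖h y * g (x - y) * (f (x - y) - f x)‖
            = ‖h y‖ * ‖g (x - y)‖ * ‖f (x - y) - f x‖ := by rw [norm_mul, norm_mul]
          _ ≤ ‖h y‖ * ‖g (x - y)‖ * (M * ‖y‖) := by
              refine mul_le_mul_of_nonneg_left hy ?_
              positivity
          _ = M * (‖h y • y‖ * ‖g (x - y)‖) := by rw [norm_smul]; ring
      calc (‖Dd y‖₊ : ℝ≥0∞) = ENNReal.ofReal ‖Dd y‖ := (ofReal_norm _).symm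
        _ ≤ ENNReal.ofReal (M * (‖h y • y‖ * ‖g (x - y)‖)) := ENNReal.ofReal_le_ofReal hre
        _ = Me * (K y * Gn (x - y)) := by
            rw [ENNReal.ofReal_mul hM0, ENNReal.ofReal_mul (norm_nonneg _),
              ofReal_norm, ofReal_norm, enorm_eq_nnnorm, enorm_eq_nnnorm, hMe_eq]
    by_cases hcase : Me * Φ x = ⊤
    · exact hcase ▸ le_top
    · have hDdlint : (∫⁻ y, (‖Dd y‖₊ : ℝ≥0∞)) ≤ Me * Φ x := by
        calc (∫⁻ y, (‖Dd y‖₊ : ℝ≥0∞)) ≤ ∫⁻ y, Me * (K y * Gn (x - y)) :=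
            lintegral_mono_ae hDdbd
          _ = Me * Φ x := lintegral_const_mul' _ _ hMet
      have hDdmeas : AEStronglyMeasurable Dd volume := by
        have h1 : AEStronglyMeasurable (fun y : EuclideanSpace ℝ (Fin d) => g (x - y))
            volume := hmeasg.comp_quasiMeasurePreserving
          (Measure.measurePreserving_sub_left volume x).quasiMeasurePreserving
        have h2 : AEStronglyMeasurable
            (fun y : EuclideanSpace ℝ (Fin d) => f (x - y) - f x) volume :=
          ((hcontf.comp (continuous_const.sub continuous_id)).sub
            continuous_const).aestronglyMeasurable
        exact (hmeash.mul h1).mul h2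
      have hDdint : Integrable Dd volume :=
        ⟨hDdmeas, hDdlint.trans_lt (lt_top_iff_ne_top.mpr hcase)⟩
      have hAeq : (fun y => h y * (f (x - y) * g (x - y)))
          = fun y => Dd y + f x * (h y * g (x - y)) := by
        funext y; rw [hDddef]; ring
      by_cases hB : Integrable (fun y => h y * g (x - y)) volume
      · have hdiff : convolution h (fun y => f y * g y) L volume x
            - f x * convolution h g L volume x = ∫ y, Dd y := by
          rw [hconv_fg, hconv_g, hAeq,
            integral_add hDdint (hB.const_mul (f x)), integral_const_mul]
          ring
        rw [hdiff]
        exact (enorm_integral_le_lintegral_enorm _).trans hDdlint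
      · by_cases hfx : f x = 0
        · have hAeq0 : (fun y => h y * (f (x - y) * g (x - y))) = Dd := by
            funext y; rw [hDddef, hfx]; ring
          rw [hconv_fg, hAeq0, hfx, zero_mul, sub_zero]
          exact (enorm_integral_le_lintegral_enorm _).trans hDdlint
        · have hAnint : ¬ Integrable (fun y => h y * (f (x - y) * g (x - y))) volume := by
            intro hA
            apply hB
            have heq : (fun y => h y * g (x - y))
                = fun y => (f x)⁻¹ • ((h y * (f (x - y) * g (x - y))) - Dd y) := by
              funext y; simp only [hDddef, smul_eq_mul]; rw [show h y * (f (x - y) * g (x - y)) - h y * g (x - y) * (f (x - y) - f x) = f x * (h y * g (x - y)) by ring, inv_mul_cancel_left₀ hfx]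
            rw [heq]
            exact Integrable.smul (c := (f x)⁻¹) (hA.sub hDdint)
          rw [hconv_fg, hconv_g, integral_undef hAnint, integral_undef hB]
          simp
  calc eLpNorm (fun x => convolution h (fun y => f y * g y) L volume x
        - f x * convolution h g L volume x) p volume
      = eN p (fun x => (‖convolution h (fun y => f y * g y) L volume x
          - f x * convolution h g L volume x‖₊ : ℝ≥0∞)) volume := eLpNorm_eq_eN hp0 _ _
    _ ≤ eN p (fun x => Me * Φ x) volume := eN_mono_ae hptwise
    _ = Me * eN p Φ volume := eN_const_mul hp0 Me hMet Φ volume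
    _ ≤ Me * (eN p₁ K volume * eN p₂ Gn volume) :=
        mul_le_mul_right (young hKmeas hGmeas hp hp₁ hp₂ hexp) Me
    _ = 1 * eLpNorm (fun x => h x • x :
          EuclideanSpace ℝ (Fin d) → EuclideanSpace ℝ (Fin d)) p₁ volume
        * eLpNorm (fun x => fderiv ℝ f x) ⊤ volume * eLpNorm g p₂ volume := by
        rw [eLpNorm_eq_eN hp₁0 (fun x => h x • x :
            EuclideanSpace ℝ (Fin d) → EuclideanSpace ℝ (Fin d)) volume,
          eLpNorm_eq_eN hp₂0 g volume, ← hMedef, one_mul]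
        ring
end
end

section
/- Let η > 0, α ≥ 0, and let (v, θ) solve the linear system ∂_t v + α v − η Δv − ∇θ = 0, ∂_t θ − div v = 0 on ℝ⁺ × ℝ² with smooth rapidly decaying data. Define ℛ = Λ^{−1} div (a Fourier multiplier with symbol iξ/|ξ| acting on vector fields) and Ω = ℛv + η Λθ. Then Ω satisfies the damped equation ∂_t Ω + (1/η) Ω = (1/η − α) ℛv. -/
open MeasureTheory Real FourierTransform

noncomputable section

open scoped RealInnerProductSpace

namespace Stmt7Aux

local notation "E2" => EuclideanSpace ℝ (Fin 2)

variable {F : Type*} [NormedAddCommGroup F] [NormedSpace ℝ F]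

lemma comp_integrable (f : SchwartzMap E2 F) (A : F →L[ℝ] ℝ) :
    Integrable (fun x => ((A (f x) : ℝ) : ℂ)) volume :=
  (Complex.ofRealCLM.comp A).integrable_comp (f.integrable (μ := volume))

lemma comp_fderiv (f : SchwartzMap E2 F) (A : F →L[ℝ] ℝ) (x : E2) :
    fderiv ℝ (fun y => A (f y)) x = A.comp (fderiv ℝ f x) :=
  (A.hasFDerivAt.comp x f.differentiableAt.hasFDerivAt).fderiv

lemma compC_fderiv (f : SchwartzMap E2 F) (A : F →L[ℝ] ℝ) (x : E2) :
    fderiv ℝ (fun y => ((A (f y) : ℝ) : ℂ)) x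
      = (Complex.ofRealCLM.comp A).comp (fderiv ℝ f x) :=
  ((Complex.ofRealCLM.comp A).hasFDerivAt.comp x f.differentiableAt.hasFDerivAt).fderiv

lemma compC_fderiv_integrable (f : SchwartzMap E2 F) (A : F →L[ℝ] ℝ) :
    Integrable (fun x => fderiv ℝ (fun y => ((A (f y) : ℝ) : ℂ)) x) volume := by
  have h : (fun x => fderiv ℝ (fun y => ((A (f y) : ℝ) : ℂ)) x)
      = fun x => (ContinuousLinearMap.compL ℝ E2 F ℂ (Complex.ofRealCLM.comp A))
          ((SchwartzMap.fderivCLM ℝ E2 F f) x) := by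
    funext x
    rw [compC_fderiv, SchwartzMap.fderivCLM_apply]
    rfl
  rw [h]
  exact (ContinuousLinearMap.compL ℝ E2 F ℂ _).integrable_comp
    ((SchwartzMap.fderivCLM ℝ E2 F f).integrable (μ := volume))

lemma fourier_comp_fderiv (f : SchwartzMap E2 F) (A : F →L[ℝ] ℝ) (m ξ : E2) :
    𝓕 (fun x => ((fderiv ℝ (fun y => A (f y)) x m : ℝ) : ℂ)) ξ
      = (2 * π * Complex.I * ((⟪ξ, m⟫ : ℝ) : ℂ)) * 𝓕 (fun x => ((A (f x) : ℝ) : ℂ)) ξ := by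
  have h1 : (fun x => ((fderiv ℝ (fun y => A (f y)) x m : ℝ) : ℂ))
      = fun x => fderiv ℝ (fun y => ((A (f y) : ℝ) : ℂ)) x m := by
    funext x
    rw [comp_fderiv, compC_fderiv]
    rfl
  rw [h1, ← Real.fourier_continuousLinearMap_apply (compC_fderiv_integrable f A)]
  have h2 : 𝓕 (fun x => fderiv ℝ (fun y => ((A (f y) : ℝ) : ℂ)) x)
      = VectorFourier.fourierSMulRight (-innerSL ℝ) (𝓕 (fun x => ((A (f x) : ℝ) : ℂ))) := by
    exact Real.fourier_fderiv (comp_integrable f A)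
      ((Complex.ofRealCLM.comp A).differentiable.comp f.differentiable)
      (compC_fderiv_integrable f A)
  rw [h2]
  simp [VectorFourier.fourierSMulRight_apply, Complex.real_smul, innerSL_apply_apply]
  rw [show ((innerSL ℝ) ξ) m = ⟪ξ, m⟫ from rfl]
  ring

lemma deriv_eq_comp (f : SchwartzMap E2 F) (A : F →L[ℝ] ℝ) (m : E2) :
    (fun y => fderiv ℝ (fun z => A (f z)) y m)
      = fun y => A ((LineDeriv.lineDerivOpCLM ℝ (SchwartzMap E2 F) m f) y) := by
  funext y
  rw [comp_fderiv, LineDeriv.lineDerivOpCLM_apply]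
  rfl

lemma deriv_eq_compC (f : SchwartzMap E2 F) (A : F →L[ℝ] ℝ) (m : E2) :
    (fun y => ((fderiv ℝ (fun z => A (f z)) y m : ℝ) : ℂ))
      = fun y => ((A ((LineDeriv.lineDerivOpCLM ℝ (SchwartzMap E2 F) m f) y) : ℝ) : ℂ) := by
  funext y
  exact congrArg _ (congrFun (deriv_eq_comp f A m) y)

lemma deriv_integrable (f : SchwartzMap E2 F) (A : F →L[ℝ] ℝ) (m : E2) :
    Integrable (fun x => ((fderiv ℝ (fun y => A (f y)) x m : ℝ) : ℂ)) volume := by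
  rw [deriv_eq_compC f A m]
  exact comp_integrable (LineDeriv.lineDerivOpCLM ℝ (SchwartzMap E2 F) m f) A

lemma deriv2_integrable (f : SchwartzMap E2 F) (A : F →L[ℝ] ℝ) (m : E2) :
    Integrable (fun x =>
      ((fderiv ℝ (fun y => fderiv ℝ (fun z => A (f z)) y m) x m : ℝ) : ℂ)) volume := by
  rw [deriv_eq_comp f A m]
  exact deriv_integrable (LineDeriv.lineDerivOpCLM ℝ (SchwartzMap E2 F) m f) A m

lemma fourier_comp_fderiv2 (f : SchwartzMap E2 F) (A : F →L[ℝ] ℝ) (m ξ : E2) :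
    𝓕 (fun x => ((fderiv ℝ (fun y => fderiv ℝ (fun z => A (f z)) y m) x m : ℝ) : ℂ)) ξ
      = (2 * π * Complex.I * ((⟪ξ, m⟫ : ℝ) : ℂ)) ^ 2
          * 𝓕 (fun x => ((A (f x) : ℝ) : ℂ)) ξ := by
  rw [deriv_eq_comp f A m, fourier_comp_fderiv (LineDeriv.lineDerivOpCLM ℝ (SchwartzMap E2 F) m f) A m ξ]
  rw [← deriv_eq_compC f A m, fourier_comp_fderiv f A m ξ]
  ring

lemma ft4 {G f g h k : E2 → ℂ} (c1 c2 c3 c4 : ℂ)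
    (hf : Integrable f volume) (hg : Integrable g volume)
    (hh : Integrable h volume) (hk : Integrable k volume)
    (hG : ∀ x, G x = c1 * f x + c2 * g x + c3 * h x + c4 * k x) (ξ : E2) :
    𝓕 G ξ = c1 * 𝓕 f ξ + c2 * 𝓕 g ξ + c3 * 𝓕 h ξ + c4 * 𝓕 k ξ := by
  have hf' := (Real.fourierIntegral_convergent_iff (f := f) ξ).2 hf
  have hg' := (Real.fourierIntegral_convergent_iff (f := g) ξ).2 hg
  have hh' := (Real.fourierIntegral_convergent_iff (f := h) ξ).2 hh
  have hk' := (Real.fourierIntegral_convergent_iff (f := k) ξ).2 hk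
  have key : ∀ x : E2, 𝐞 (-⟪x, ξ⟫) • G x
      = c1 • (𝐞 (-⟪x, ξ⟫) • f x) + c2 • (𝐞 (-⟪x, ξ⟫) • g x)
        + c3 • (𝐞 (-⟪x, ξ⟫) • h x) + c4 • (𝐞 (-⟪x, ξ⟫) • k x) := by
    intro x
    rw [hG x]
    simp [Circle.smul_def, smul_eq_mul]
    ring
  rw [Real.fourier_eq, Real.fourier_eq, Real.fourier_eq,
    Real.fourier_eq, Real.fourier_eq]
  calc ∫ x, 𝐞 (-⟪x, ξ⟫) • G x
      = ∫ x, (c1 • (𝐞 (-⟪x, ξ⟫) • f x) + c2 • (𝐞 (-⟪x, ξ⟫) • g x)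
        + c3 • (𝐞 (-⟪x, ξ⟫) • h x) + c4 • (𝐞 (-⟪x, ξ⟫) • k x)) := by
        exact integral_congr_ae (Filter.Eventually.of_forall key)
    _ = (∫ x, (c1 • (𝐞 (-⟪x, ξ⟫) • f x) + c2 • (𝐞 (-⟪x, ξ⟫) • g x)
          + c3 • (𝐞 (-⟪x, ξ⟫) • h x))) + ∫ x, c4 • (𝐞 (-⟪x, ξ⟫) • k x) := by
        have H1 : Integrable (fun x : E2 => c1 • (𝐞 (-⟪x, ξ⟫) • f x)) volume := hf'.smul c1
        have H2 : Integrable (fun x : E2 => c2 • (𝐞 (-⟪x, ξ⟫) • g x)) volume := hg'.smul c2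
        have H3 : Integrable (fun x : E2 => c3 • (𝐞 (-⟪x, ξ⟫) • h x)) volume := hh'.smul c3
        have H4 : Integrable (fun x : E2 => c4 • (𝐞 (-⟪x, ξ⟫) • k x)) volume := hk'.smul c4
        exact integral_add ((H1.add H2).add H3) H4
    _ = (∫ x, (c1 • (𝐞 (-⟪x, ξ⟫) • f x) + c2 • (𝐞 (-⟪x, ξ⟫) • g x)))
          + (∫ x, c3 • (𝐞 (-⟪x, ξ⟫) • h x)) + ∫ x, c4 • (𝐞 (-⟪x, ξ⟫) • k x) := by
        have H1 : Integrable (fun x : E2 => c1 • (𝐞 (-⟪x, ξ⟫) • f x)) volume := hf'.smul c1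
        have H2 : Integrable (fun x : E2 => c2 • (𝐞 (-⟪x, ξ⟫) • g x)) volume := hg'.smul c2
        have H3 : Integrable (fun x : E2 => c3 • (𝐞 (-⟪x, ξ⟫) • h x)) volume := hh'.smul c3
        exact congrArg (fun z => z + ∫ x, c4 • (𝐞 (-⟪x, ξ⟫) • k x)) (integral_add (H1.add H2) H3)
    _ = (∫ x, c1 • (𝐞 (-⟪x, ξ⟫) • f x)) + (∫ x, c2 • (𝐞 (-⟪x, ξ⟫) • g x))
          + (∫ x, c3 • (𝐞 (-⟪x, ξ⟫) • h x)) + ∫ x, c4 • (𝐞 (-⟪x, ξ⟫) • k x) := by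
        have H1 : Integrable (fun x : E2 => c1 • (𝐞 (-⟪x, ξ⟫) • f x)) volume := hf'.smul c1
        have H2 : Integrable (fun x : E2 => c2 • (𝐞 (-⟪x, ξ⟫) • g x)) volume := hg'.smul c2
        exact congrArg (fun z => z + (∫ x, c3 • (𝐞 (-⟪x, ξ⟫) • h x)) + ∫ x, c4 • (𝐞 (-⟪x, ξ⟫) • k x))
          (integral_add H1 H2)
    _ = c1 * (∫ x, 𝐞 (-⟪x, ξ⟫) • f x) + c2 * (∫ x, 𝐞 (-⟪x, ξ⟫) • g x)
        + c3 * (∫ x, 𝐞 (-⟪x, ξ⟫) • h x) + c4 * (∫ x, 𝐞 (-⟪x, ξ⟫) • k x) := by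
        simp only [smul_eq_mul, integral_const_mul]

lemma eq_zero_of_ft_zero {G : E2 → ℂ} (hc : Continuous G) (hi : Integrable G volume)
    (hz : ∀ ξ : E2, ξ ≠ 0 → 𝓕 G ξ = 0) : ∀ x, G x = 0 := by
  have hcont : Continuous (𝓕 G) :=
    VectorFourier.fourierIntegral_continuous Real.continuous_fourierChar
      (by exact continuous_inner) hi
  have hd : Dense ({(0 : E2)}ᶜ) := dense_compl_singleton 0
  have hz' : 𝓕 G = fun _ => (0 : ℂ) :=
    Continuous.ext_on hd hcont continuous_const (fun ξ hξ => hz ξ hξ)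
  intro x
  have hinv := hi.fourierInv_fourier_eq (v := x) (by rw [hz']; exact integrable_zero _ _ _)
    hc.continuousAt
  rw [hz'] at hinv
  rw [← hinv]
  simp [Real.fourierInv_eq]

end Stmt7Aux

open Stmt7Aux

/-- let `η > 0`, `α ≥ 0` and let `(v, θ)` solve the linear system
`∂ₜv + αv − ηΔv − ∇θ = 0`, `∂ₜθ − div v = 0` on `ℝ × ℝ²` with smooth rapidly decaying data.
With `ℛ = Λ^{−1} div` (Fourier symbol `iξ/|ξ|`) and `Λ` (Fourier symbol `2π|ξ|`),
set `Ω = ℛv + ηΛθ`. Then `∂ₜΩ + (1/η)Ω = (1/η − α)ℛv`. Here `R = ℛv`, `Lθ = Λθ` and their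
time derivatives `Rt`, `Lθt` are characterized on the Fourier side. -/
theorem stmt_7 (η α : ℝ) (hη : 0 < η) (hα : 0 ≤ α)
    (v : ℝ → SchwartzMap (EuclideanSpace ℝ (Fin 2)) (EuclideanSpace ℝ (Fin 2)))
    (θ : ℝ → SchwartzMap (EuclideanSpace ℝ (Fin 2)) ℝ)
    (vt : ℝ → EuclideanSpace ℝ (Fin 2) → EuclideanSpace ℝ (Fin 2))
    (θt R Lθ Rt Lθt : ℝ → EuclideanSpace ℝ (Fin 2) → ℝ)
    -- time derivatives of the solution
    (hvt : ∀ t x (i : Fin 2), HasDerivAt (fun τ => v τ x i) (vt t x i) t)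
    (hθt : ∀ t x, HasDerivAt (fun τ => θ τ x) (θt t x) t)
    (hvtInt : ∀ t (i : Fin 2), Integrable (fun x => vt t x i) volume)
    (hθtInt : ∀ t, Integrable (θt t) volume)
    -- the linear PDE
    (hPDE1 : ∀ t x (i : Fin 2),
      vt t x i + α * v t x i
        - η * (∑ j : Fin 2, fderiv ℝ
            (fun y => fderiv ℝ (fun z => v t z i) y (EuclideanSpace.single j 1)) x
            (EuclideanSpace.single j 1))
        - fderiv ℝ (fun y => θ t y) x (EuclideanSpace.single i 1) = 0)
    (hPDE2 : ∀ t x,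
      θt t x - (∑ j : Fin 2,
        fderiv ℝ (fun y => v t y j) x (EuclideanSpace.single j 1)) = 0)
    -- regularity of R = ℛv, Lθ = Λθ and their time derivatives
    (hRreg : ∀ t, Continuous (R t) ∧ Integrable (R t) volume)
    (hLθreg : ∀ t, Continuous (Lθ t) ∧ Integrable (Lθ t) volume)
    (hRtreg : ∀ t, Continuous (Rt t) ∧ Integrable (Rt t) volume)
    (hLθtreg : ∀ t, Continuous (Lθt t) ∧ Integrable (Lθt t) volume)
    -- Fourier characterization of R = ℛv and Lθ = Λθ
    (hR : ∀ t (ξ : EuclideanSpace ℝ (Fin 2)), ξ ≠ 0 →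
      𝓕 (fun x => (R t x : ℂ)) ξ
        = Complex.I * (∑ i : Fin 2, (ξ i : ℂ) * 𝓕 (fun x => (v t x i : ℂ)) ξ) / (‖ξ‖ : ℂ))
    (hLθ : ∀ t (ξ : EuclideanSpace ℝ (Fin 2)),
      𝓕 (fun x => (Lθ t x : ℂ)) ξ
        = ((2 * Real.pi * ‖ξ‖ : ℝ) : ℂ) * 𝓕 (fun x => (θ t x : ℂ)) ξ)
    -- Rt and Lθt are the time derivatives, and the multipliers commute with ∂ₜ
    (hRt : ∀ t x, HasDerivAt (fun τ => R τ x) (Rt t x) t)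
    (hLθt : ∀ t x, HasDerivAt (fun τ => Lθ τ x) (Lθt t x) t)
    (hRtF : ∀ t (ξ : EuclideanSpace ℝ (Fin 2)), ξ ≠ 0 →
      𝓕 (fun x => (Rt t x : ℂ)) ξ
        = Complex.I * (∑ i : Fin 2, (ξ i : ℂ) * 𝓕 (fun x => (vt t x i : ℂ)) ξ) / (‖ξ‖ : ℂ))
    (hLθtF : ∀ t (ξ : EuclideanSpace ℝ (Fin 2)),
      𝓕 (fun x => (Lθt t x : ℂ)) ξ
        = ((2 * Real.pi * ‖ξ‖ : ℝ) : ℂ) * 𝓕 (fun x => (θt t x : ℂ)) ξ) :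
    -- conclusion: ∂ₜΩ + (1/η) Ω = (1/η − α) ℛv with Ω = ℛv + ηΛθ
    ∀ t x, (Rt t x + η * Lθt t x) + (1/η) * (R t x + η * Lθ t x)
      = (1/η - α) * R t x := by
  intro t x
  set m : Fin 2 → EuclideanSpace ℝ (Fin 2) := fun j => EuclideanSpace.single j (1 : ℝ) with hm
  -- the key vanishing combination
  have key : ∀ y, Rt t y + η * Lθt t y + Lθ t y + α * R t y = 0 := by
    have hz : ∀ ξ : EuclideanSpace ℝ (Fin 2), ξ ≠ 0 →
        𝓕 (fun y => ((Rt t y + η * Lθt t y + Lθ t y + α * R t y : ℝ) : ℂ)) ξ = 0 := by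
      intro ξ hξ
      have hip : ∀ j : Fin 2, (⟪ξ, m j⟫ : ℝ) = ξ j := by
        intro j
        simp [hm, EuclideanSpace.inner_single_right]
      have hn : ((‖ξ‖ : ℝ) : ℂ) ≠ 0 := by
        simpa using norm_ne_zero_iff.2 hξ
      have h2 : ((ξ 0 : ℝ) : ℂ) ^ 2 + ((ξ 1 : ℝ) : ℂ) ^ 2 = ((‖ξ‖ : ℝ) : ℂ) ^ 2 := by
        have : (ξ 0 : ℝ) ^ 2 + (ξ 1 : ℝ) ^ 2 = ‖ξ‖ ^ 2 := by
          rw [← real_inner_self_eq_norm_sq]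
          simp only [PiLp.inner_apply, Fin.sum_univ_two, RCLike.inner_apply, conj_trivial]
          ring
        exact_mod_cast congrArg Complex.ofReal this
      -- Fourier transforms of first derivatives of v-components
      have hd : ∀ i j : Fin 2,
          𝓕 (fun y => ((fderiv ℝ (fun z => v t z i) y (m j) : ℝ) : ℂ)) ξ
            = (2 * π * Complex.I * ((ξ j : ℝ) : ℂ))
                * 𝓕 (fun y => ((v t y i : ℝ) : ℂ)) ξ := by
        intro i j
        have := fourier_comp_fderiv (v t) (EuclideanSpace.proj i) (m j) ξ
        rw [hip j] at this
        exact this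
      -- Fourier transforms of second derivatives of v-components
      have hd2 : ∀ i j : Fin 2,
          𝓕 (fun y => ((fderiv ℝ (fun z => fderiv ℝ (fun w => v t w i) z (m j)) y (m j) : ℝ) : ℂ)) ξ
            = (2 * π * Complex.I * ((ξ j : ℝ) : ℂ)) ^ 2
                * 𝓕 (fun y => ((v t y i : ℝ) : ℂ)) ξ := by
        intro i j
        have := fourier_comp_fderiv2 (v t) (EuclideanSpace.proj i) (m j) ξ
        rw [hip j] at this
        exact this
      -- Fourier transform of derivatives of θ
      have hdθ : ∀ i : Fin 2,
          𝓕 (fun y => ((fderiv ℝ (fun z => θ t z) y (m i) : ℝ) : ℂ)) ξ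
            = (2 * π * Complex.I * ((ξ i : ℝ) : ℂ))
                * 𝓕 (fun y => ((θ t y : ℝ) : ℂ)) ξ := by
        intro i
        have := fourier_comp_fderiv (θ t) (ContinuousLinearMap.id ℝ ℝ) (m i) ξ
        rw [hip i] at this
        exact this
      -- Fourier transform of θt
      have hTt : 𝓕 (fun y => ((θt t y : ℝ) : ℂ)) ξ
          = (2 * π * Complex.I * ((ξ 0 : ℝ) : ℂ)) * 𝓕 (fun y => ((v t y 0 : ℝ) : ℂ)) ξ
            + (2 * π * Complex.I * ((ξ 1 : ℝ) : ℂ)) * 𝓕 (fun y => ((v t y 1 : ℝ) : ℂ)) ξ := by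
        have hsplit := ft4 (G := fun y => ((θt t y : ℝ) : ℂ))
          (f := fun y => ((fderiv ℝ (fun z => v t z 0) y (m 0) : ℝ) : ℂ))
          (g := fun y => ((fderiv ℝ (fun z => v t z 1) y (m 1) : ℝ) : ℂ))
          (h := fun y => ((θt t y : ℝ) : ℂ)) (k := fun y => ((θt t y : ℝ) : ℂ))
          1 1 0 0
          (deriv_integrable (v t) (EuclideanSpace.proj 0) (m 0))
          (deriv_integrable (v t) (EuclideanSpace.proj 1) (m 1))
          (Complex.ofRealCLM.integrable_comp (hθtInt t))
          (Complex.ofRealCLM.integrable_comp (hθtInt t))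
          (by
            intro y
            beta_reduce
            have h0 := hPDE2 t y
            simp only [Fin.sum_univ_two] at h0
            have : θt t y = fderiv ℝ (fun z => v t z 0) y (m 0)
                + fderiv ℝ (fun z => v t z 1) y (m 1) := by
              rw [hm]; linarith
            rw [this]; push_cast; ring) ξ
        rw [hsplit, hd 0 0, hd 1 1]
        ring
      -- Fourier transform of vt components
      have hVt : ∀ i : Fin 2, 𝓕 (fun y => ((vt t y i : ℝ) : ℂ)) ξ
          = (2 * π * Complex.I * ((ξ i : ℝ) : ℂ)) * 𝓕 (fun y => ((θ t y : ℝ) : ℂ)) ξ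
            + (η : ℂ) * ((2 * π * Complex.I * ((ξ 0 : ℝ) : ℂ)) ^ 2
                * 𝓕 (fun y => ((v t y i : ℝ) : ℂ)) ξ)
            + (η : ℂ) * ((2 * π * Complex.I * ((ξ 1 : ℝ) : ℂ)) ^ 2
                * 𝓕 (fun y => ((v t y i : ℝ) : ℂ)) ξ)
            + (-(α : ℂ)) * 𝓕 (fun y => ((v t y i : ℝ) : ℂ)) ξ := by
        intro i
        have hsplit := ft4 (G := fun y => ((vt t y i : ℝ) : ℂ))
          (f := fun y => ((fderiv ℝ (fun z => θ t z) y (m i) : ℝ) : ℂ))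
          (g := fun y => ((fderiv ℝ (fun z => fderiv ℝ (fun w => v t w i) z (m 0)) y (m 0) : ℝ) : ℂ))
          (h := fun y => ((fderiv ℝ (fun z => fderiv ℝ (fun w => v t w i) z (m 1)) y (m 1) : ℝ) : ℂ))
          (k := fun y => ((v t y i : ℝ) : ℂ))
          1 (η : ℂ) (η : ℂ) (-(α : ℂ))
          (deriv_integrable (θ t) (ContinuousLinearMap.id ℝ ℝ) (m i))
          (deriv2_integrable (v t) (EuclideanSpace.proj i) (m 0))
          (deriv2_integrable (v t) (EuclideanSpace.proj i) (m 1))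
          (comp_integrable (v t) (EuclideanSpace.proj i))
          (by
            intro y
            beta_reduce
            have h0 := hPDE1 t y i
            simp only [Fin.sum_univ_two] at h0
            have : vt t y i = fderiv ℝ (fun z => θ t z) y (m i)
                + η * fderiv ℝ (fun z => fderiv ℝ (fun w => v t w i) z (m 0)) y (m 0)
                + η * fderiv ℝ (fun z => fderiv ℝ (fun w => v t w i) z (m 1)) y (m 1)
                + (-α) * v t y i := by
              rw [hm]; linarith
            rw [this]; push_cast; ring) ξ
        rw [hsplit, hdθ i, hd2 i 0, hd2 i 1]
        ring
      -- split the Fourier transform of the combination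
      have hsplit := ft4 (G := fun y => ((Rt t y + η * Lθt t y + Lθ t y + α * R t y : ℝ) : ℂ))
        (f := fun y => ((Rt t y : ℝ) : ℂ)) (g := fun y => ((Lθt t y : ℝ) : ℂ))
        (h := fun y => ((Lθ t y : ℝ) : ℂ)) (k := fun y => ((R t y : ℝ) : ℂ))
        1 (η : ℂ) 1 (α : ℂ)
        (Complex.ofRealCLM.integrable_comp (hRtreg t).2)
        (Complex.ofRealCLM.integrable_comp (hLθtreg t).2)
        (Complex.ofRealCLM.integrable_comp (hLθreg t).2)
        (Complex.ofRealCLM.integrable_comp (hRreg t).2)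
        (by intro y; beta_reduce; push_cast; ring) ξ
      rw [hsplit, hRtF t ξ hξ, hLθtF t ξ, hLθ t ξ, hR t ξ hξ]
      simp only [Fin.sum_univ_two]
      rw [hVt 0, hVt 1, hTt]
      have hI : Complex.I * Complex.I = -1 := Complex.I_mul_I
      have hu : ((‖ξ‖ : ℝ) : ℂ) * (((‖ξ‖ : ℝ) : ℂ))⁻¹ = 1 := mul_inv_cancel₀ hn
      push_cast
      set T := 𝓕 (fun y => ((θ t y : ℝ) : ℂ)) ξ with hT
      set V0 := 𝓕 (fun y => ((v t y 0 : ℝ) : ℂ)) ξ with hV0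
      set V1 := 𝓕 (fun y => ((v t y 1 : ℝ) : ℂ)) ξ with hV1
      set n := ((‖ξ‖ : ℝ) : ℂ) with hnn
      set x0 := ((ξ 0 : ℝ) : ℂ) with hx0
      set x1 := ((ξ 1 : ℝ) : ℂ) with hx1
      linear_combination
        (2 * (π : ℂ) * n⁻¹ * (x0 ^ 2 + x1 ^ 2) * T
          + 4 * (π : ℂ) ^ 2 * Complex.I * (η : ℂ) * n⁻¹ * (x0 ^ 2 + x1 ^ 2)
              * (x0 * V0 + x1 * V1)) * hI
        + (-(2 * (π : ℂ) * n⁻¹ * T)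
            - 4 * (π : ℂ) ^ 2 * Complex.I * (η : ℂ) * n⁻¹ * (x0 * V0 + x1 * V1)) * h2
        + (-(2 * (π : ℂ) * n * T)
            - 4 * (π : ℂ) ^ 2 * Complex.I * (η : ℂ) * n * (x0 * V0 + x1 * V1)) * hu
    -- conclude pointwise vanishing
    have hcz := eq_zero_of_ft_zero
      (G := fun y => ((Rt t y + η * Lθt t y + Lθ t y + α * R t y : ℝ) : ℂ))
      (Complex.continuous_ofReal.comp ((((hRtreg t).1.add (continuous_const.mul (hLθtreg t).1)).add (hLθreg t).1).add (continuous_const.mul (hRreg t).1)))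
      (Complex.ofRealCLM.integrable_comp ((((hRtreg t).2.add (((hLθtreg t).2.const_mul η))).add (hLθreg t).2).add ((hRreg t).2.const_mul α)))
      hz
    intro y
    exact Complex.ofReal_eq_zero.1 (hcz y)
  have hy := key x
  have hinv : η * η⁻¹ = 1 := mul_inv_cancel₀ (ne_of_gt hη)
  linear_combination hy + Lθ t x * hinv
end
end
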